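/- Let S₀ be a set of modal propositional formulas closed under the rule 'if φ ∈ S₀ then K(φ) ∈ S₀', containing all instances of K(φ→ψ)→K(φ)→K(ψ), and containing K(φ) for every propositional tautology φ (where here semantic consequence S₀ ⊨ φ means φ is true in every model of S₀, models interpreting K arbitrarily as a function on formulas). Then: whenever S₀ ⊨ φ, also S₀ ⊨ K(φ). -/

import Mathlib

/-- Formulas of propositional modal logic with a unary operator K. -/
inductive Formula : Type
  | atom : ℕ → Formula
  | imp : Formula → Formula → Formula
  | neg : Formula → Formula
  | K : Formula → Formula

/-- A model: truth values for atoms, and an arbitrary truth-value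
assignment to each formula `K φ`. -/
structure Model where
  atoms : ℕ → Prop
  kval : Formula → Prop

/-- Classical evaluation; `K φ` is read off from `kval`. -/
def Model.eval (M : Model) : Formula → Prop
  | .atom n => M.atoms n
  | .imp φ ψ => M.eval φ → M.eval ψ
  | .neg φ => ¬ M.eval φ
  | .K φ => M.kval φ

def Formula.or (φ ψ : Formula) : Formula := φ.neg.imp ψ
def Formula.and (φ ψ : Formula) : Formula := (φ.imp ψ.neg).neg

/-- φ is a tautology (valid): true in every model. -/
def Valid (φ : Formula) : Prop := ∀ M : Model, M.eval φ

/-- Semantic consequence. -/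
def Entails (S : Set Formula) (φ : Formula) : Prop :=
  ∀ M : Model, (∀ ψ ∈ S, M.eval ψ) → M.eval φ

/-! ### Auxiliary machinery: Boolean valuations and compactness -/

open Classical

/-- Boolean evaluation treating `atom n` and `K φ` as independent variables. -/
def bval (v : Formula → Bool) : Formula → Bool
  | .atom n => v (.atom n)
  | .imp φ ψ => !(bval v φ) || bval v ψ
  | .neg φ => !(bval v φ)
  | .K φ => v (.K φ)

/-- Model induced by a boolean valuation. -/
def modelOf (v : Formula → Bool) : Model :=
  ⟨fun n => v (.atom n) = true, fun ψ => v (.K ψ) = true⟩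

lemma eval_modelOf (v : Formula → Bool) : ∀ ψ, (modelOf v).eval ψ ↔ bval v ψ = true := by
  intro ψ
  induction ψ with
  | atom n => simp [Model.eval, bval, modelOf]
  | imp φ ψ ihφ ihψ =>
      simp only [Model.eval, bval]
      rw [ihφ, ihψ]
      cases bval v φ <;> cases bval v ψ <;> simp
  | neg φ ihφ =>
      simp only [Model.eval, bval]
      rw [ihφ]
      cases bval v φ <;> simp
  | K φ => simp [Model.eval, bval, modelOf]

/-- Boolean valuation induced by a model. -/
noncomputable def valOf (M : Model) : Formula → Bool :=
  fun ψ => decide (M.eval ψ)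

lemma bval_valOf (M : Model) : ∀ ψ, bval (valOf M) ψ = true ↔ M.eval ψ := by
  intro ψ
  induction ψ with
  | atom n => simp [bval, valOf, Model.eval]; exact decide_eq_true_iff
  | imp φ ψ ihφ ihψ =>
      simp only [bval, Model.eval]
      rw [← ihφ, ← ihψ]
      cases bval (valOf M) φ <;> cases bval (valOf M) ψ <;> simp
  | neg φ ihφ =>
      simp only [bval, Model.eval]
      rw [← ihφ]
      cases bval (valOf M) φ <;> simp
  | K φ => simp [bval, valOf, Model.eval]; exact decide_eq_true_iff

lemma isClopen_bval (ψ : Formula) : IsClopen {v : Formula → Bool | bval v ψ = true} := by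
  induction ψ with
  | atom n =>
      have : {v : Formula → Bool | bval v (.atom n) = true}
          = (fun v : Formula → Bool => v (.atom n)) ⁻¹' {true} := by
        ext v; simp [bval]
      rw [this]
      exact (isClopen_discrete {true}).preimage (continuous_apply _)
  | imp φ ψ ihφ ihψ =>
      have : {v : Formula → Bool | bval v (φ.imp ψ) = true}
          = {v | bval v φ = true}ᶜ ∪ {v | bval v ψ = true} := by
        ext v
        simp only [Set.mem_setOf_eq, bval, Set.mem_union, Set.mem_compl_iff]
        cases bval v φ <;> cases bval v ψ <;> simp
      rw [this]
      exact ihφ.compl.union ihψ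
  | neg φ ihφ =>
      have : {v : Formula → Bool | bval v φ.neg = true} = {v | bval v φ = true}ᶜ := by
        ext v; simp [bval]
      rw [this]; exact ihφ.compl
  | K φ =>
      have : {v : Formula → Bool | bval v (.K φ) = true}
          = (fun v : Formula → Bool => v (.K φ)) ⁻¹' {true} := by
        ext v; simp [bval]
      rw [this]
      exact (isClopen_discrete {true}).preimage (continuous_apply _)

/-- Nested implication `ψ₁ → (ψ₂ → ... → φ)`. -/
def chain : List Formula → Formula → Formula
  | [], φ => φ
  | ψ :: l, φ => ψ.imp (chain l φ)

lemma eval_chain (M : Model) (φ : Formula) :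
    ∀ L : List Formula, M.eval (chain L φ) ↔ ((∀ ψ ∈ L, M.eval ψ) → M.eval φ) := by
  intro L
  induction L with
  | nil => simp [chain]
  | cons ψ l ih =>
      simp only [chain, Model.eval, ih, List.mem_cons]
      constructor
      · intro h hall
        exact h (hall ψ (Or.inl rfl)) (fun χ hχ => hall χ (Or.inr hχ))
      · intro h hψ hl
        refine h (fun χ hχ => ?_)
        rcases hχ with rfl | hχ
        · exact hψ
        · exact hl χ hχ

/-- Compactness: if S₀ ⊨ φ then some finite list from S₀ suffices. -/
lemma compactness (S₀ : Set Formula) (φ : Formula) (h : Entails S₀ φ) :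
    ∃ L : List Formula, (∀ ψ ∈ L, ψ ∈ S₀) ∧ Valid (chain L φ) := by
  -- closed sets in the compact space of valuations
  set s : Set (Formula → Bool) := {v | bval v φ.neg = true} with hs
  have hscomp : IsCompact s := (isClopen_bval φ.neg).isClosed.isCompact
  have hempty : s ∩ ⋂ ψ : S₀, {v | bval v (ψ : Formula) = true} = ∅ := by
    ext v
    simp only [Set.mem_inter_iff, Set.mem_iInter, Set.mem_empty_iff_false, iff_false]
    rintro ⟨hv, hall⟩
    have hM : ∀ ψ ∈ S₀, (modelOf v).eval ψ := by
      intro ψ hψ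
      exact (eval_modelOf v ψ).2 (hall ⟨ψ, hψ⟩)
    have := h (modelOf v) hM
    have hneg : (modelOf v).eval φ.neg := (eval_modelOf v φ.neg).2 hv
    exact hneg this
  obtain ⟨u, hu⟩ := hscomp.elim_finite_subfamily_closed
    (fun ψ : S₀ => {v | bval v (ψ : Formula) = true})
    (fun ψ => (isClopen_bval _).isClosed) (by rw [hempty])
  refine ⟨u.toList.map (Subtype.val), ?_, ?_⟩
  · intro ψ hψ
    simp only [List.mem_map, Finset.mem_toList] at hψ
    obtain ⟨⟨χ, hχ⟩, _, rfl⟩ := hψ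
    exact hχ
  · intro M
    rw [eval_chain]
    intro hL
    by_contra hφ
    have hv : valOf M ∈ s ∩ ⋂ ψ ∈ u, {v | bval v (ψ : Formula) = true} := by
      constructor
      · show bval (valOf M) φ.neg = true
        rw [bval_valOf]
        exact hφ
      · simp only [Set.mem_iInter]
        intro ψ hψ
        show bval (valOf M) (ψ : Formula) = true
        rw [bval_valOf]
        exact hL ψ (by
          simp only [List.mem_map, Finset.mem_toList]
          exact ⟨ψ, hψ, rfl⟩)
    rw [hu] at hv
    exact hv

/-- if S₀ is closed under K, contains all distribution instances,
and contains K(φ) for every tautology φ, then S₀ ⊨ φ implies S₀ ⊨ K(φ). -/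
theorem entails_K_of_entails (S₀ : Set Formula)
    (hclosed : ∀ φ ∈ S₀, Formula.K φ ∈ S₀)
    (hdistr : ∀ φ ψ : Formula,
      ((Formula.K (φ.imp ψ)).imp ((Formula.K φ).imp (Formula.K ψ))) ∈ S₀)
    (htaut : ∀ φ : Formula, Valid φ → Formula.K φ ∈ S₀) :
    ∀ φ : Formula, Entails S₀ φ → Entails S₀ (Formula.K φ) := by
  intro φ h M hM
  obtain ⟨L, hLS, hLval⟩ := compactness S₀ φ h
  have key : ∀ L' : List Formula, (∀ ψ ∈ L', ψ ∈ S₀) → M.kval (chain L' φ) → M.kval φ := by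
    intro L'
    induction L' with
    | nil => intro _ h'; exact h'
    | cons ψ l ih =>
        intro hmem hk
        have hψ : M.kval ψ := hM _ (hclosed ψ (hmem ψ (by simp)))
        have hd := hM _ (hdistr ψ (chain l φ))
        have : M.kval (chain l φ) := hd hk hψ
        exact ih (fun χ hχ => hmem χ (by simp [hχ])) this
  exact key L hLS (hM _ (htaut _ hLval))
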